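/- Let X be a real Banach space, ω a modulus of continuity, F : X → ℝ a lower semicontinuous convex function, and A > 0 a constant such that λF(x+(1−λ)h) + (1−λ)F(x−λh) − F(x) ≤ λ(1−λ)·A·φ_ω(‖h‖) for all λ ∈ [0,1] and x, h ∈ X. Then F is Fréchet differentiable everywhere, F(x+h) − F(x) − DF(x)(h) ≤ A·φ_ω(‖h‖) for all x, h ∈ X, and ‖DF(x) − DF(y)‖_* ≤ (4/3)·A·ω(‖x−y‖) for all x, y ∈ X. -/

import Mathlib

open Set

theorem aux_phi (ω φ : ℝ → ℝ)
    (hnonneg : ∀ t ∈ Ici (0:ℝ), 0 ≤ ω t)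
    (hmono : MonotoneOn ω (Ici (0:ℝ)))
    (hφ : ∀ t, φ t = ∫ s in (0:ℝ)..t, ω s) :
    (∀ t, 0 ≤ t → 0 ≤ φ t) ∧ (∀ s t, 0 ≤ s → s ≤ t → φ s ≤ φ t)
      ∧ (∀ t, 0 ≤ t → φ t ≤ t * ω t) := by
  have hint : ∀ a b : ℝ, 0 ≤ a → a ≤ b → IntervalIntegrable ω MeasureTheory.volume a b := by
    intro a b ha hab
    exact (hmono.mono (by rw [uIcc_of_le hab]; exact fun z hz => le_trans ha hz.1)).intervalIntegrable
  have hnn : ∀ t, 0 ≤ t → 0 ≤ φ t := by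
    intro t ht
    rw [hφ]
    apply intervalIntegral.integral_nonneg ht
    intro u hu; exact hnonneg u hu.1
  refine ⟨hnn, ?_, ?_⟩
  · intro s t hs hst
    rw [hφ, hφ, ← intervalIntegral.integral_add_adjacent_intervals (hint 0 s le_rfl hs) (hint s t hs hst)]
    have : 0 ≤ ∫ u in s..t, ω u := by
      apply intervalIntegral.integral_nonneg hst
      intro u hu; exact hnonneg u (le_trans hs hu.1)
    linarith
  · intro t ht
    rw [hφ]
    calc (∫ s in (0:ℝ)..t, ω s) ≤ ∫ s in (0:ℝ)..t, ω t := by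
          apply intervalIntegral.integral_mono_on ht (hint 0 t le_rfl ht)
            (intervalIntegrable_const)
          intro u hu; exact hmono hu.1 ht hu.2
      _ = t * ω t := by simp

theorem aux_loc {X : Type*} [NormedAddCommGroup X] [NormedSpace ℝ X] [CompleteSpace X]
    (F : X → ℝ) (hlsc : LowerSemicontinuous F) (hconv : ConvexOn ℝ univ F) (x : X) :
    ∃ r > 0, ∃ M, ∀ u : X, dist u x < r → F u ≤ M := by
  have hclosed : ∀ n : ℕ, IsClosed (F ⁻¹' Iic (n:ℝ)) := fun n => hlsc.isClosed_preimage n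
  have hcover : (⋃ n : ℕ, F ⁻¹' Iic (n:ℝ)) = univ := by
    ext z
    simp only [mem_iUnion, mem_preimage, mem_Iic, mem_univ, iff_true]
    exact exists_nat_ge (F z)
  obtain ⟨n, z₀, hz₀⟩ := nonempty_interior_of_iUnion_of_closed hclosed hcover
  obtain ⟨r, hr, hball⟩ := Metric.isOpen_iff.1 isOpen_interior z₀ hz₀
  have hFn : ∀ v, dist v z₀ < r → F v ≤ n := by
    intro v hv
    have : v ∈ F ⁻¹' Iic (n:ℝ) := interior_subset (hball (Metric.mem_ball.mpr hv))
    exact this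
  refine ⟨r/2, by linarith, (n + F ((2:ℝ)•x - z₀))/2, ?_⟩
  intro u hu
  set v : X := (2:ℝ)•u - (2:ℝ)•x + z₀ with hvdef
  have hdist : dist v z₀ < r := by
    rw [dist_eq_norm]
    have : v - z₀ = (2:ℝ) • (u - x) := by rw [hvdef]; module
    rw [this, norm_smul]
    rw [dist_eq_norm] at hu
    simp only [Real.norm_ofNat]
    linarith
  have hmid : ((1:ℝ)/2) • v + ((1:ℝ)/2) • ((2:ℝ)•x - z₀) = u := by rw [hvdef]; module
  have := hconv.2 (mem_univ v) (mem_univ ((2:ℝ)•x - z₀))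
    (by norm_num : (0:ℝ) ≤ 1/2) (by norm_num : (0:ℝ) ≤ 1/2) (by norm_num)
  rw [hmid] at this
  have hv := hFn v hdist
  simp only [smul_eq_mul] at this
  linarith

theorem aux_deriv {X : Type*} [NormedAddCommGroup X] [NormedSpace ℝ X] [CompleteSpace X]
    (ω φ : ℝ → ℝ)
    (hnonneg : ∀ t ∈ Ici (0:ℝ), 0 ≤ ω t)
    (hmono : MonotoneOn ω (Ici (0:ℝ)))
    (h0' : Filter.Tendsto ω (nhdsWithin 0 (Ioi (0:ℝ))) (nhds 0))
    (hφ : ∀ t, φ t = ∫ s in (0:ℝ)..t, ω s)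
    (F : X → ℝ) (hlsc : LowerSemicontinuous F) (hconv : ConvexOn ℝ univ F)
    (A : ℝ) (hA : 0 < A)
    (hsmooth : ∀ l ∈ Icc (0:ℝ) 1, ∀ x h : X,
      l * F (x + (1 - l) • h) + (1 - l) * F (x - l • h) - F x
        ≤ l * (1 - l) * A * φ ‖h‖)
    (x : X) :
    ∃ L : X →L[ℝ] ℝ, HasFDerivAt F L x ∧ (∀ k, L k ≤ F (x + k) - F x)
      ∧ (∀ k, F (x + k) - F x ≤ L k + A * φ ‖k‖) := by
  obtain ⟨hφ0, hφmono, hφle⟩ := aux_phi ω φ hnonneg hmono hφ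
  have hAφ : ∀ k : X, 0 ≤ A * φ ‖k‖ := fun k => mul_nonneg hA.le (hφ0 _ (norm_nonneg k))
  set q : X → ℝ → ℝ := fun k t => (F (x + t • k) - F x) / t with hq
  set S : X → Set ℝ := fun k => q k '' Ioi 0 with hS
  set d : X → ℝ := fun k => sInf (S k) with hd
  have hSne : ∀ k, (S k).Nonempty := fun k => ⟨q k 1, 1, by norm_num, rfl⟩
  have hq1 : ∀ k, q k 1 = F (x + k) - F x := by intro k; simp [hq]
  -- monotonicity of slopes
  have hqmono : ∀ k : X, ∀ s t : ℝ, 0 < s → s ≤ t → q k s ≤ q k t := by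
    intro k s t hs hst
    have ht : 0 < t := lt_of_lt_of_le hs hst
    obtain ⟨c, hct, hc0, hc1⟩ : ∃ c : ℝ, c * t = s ∧ 0 ≤ c ∧ c ≤ 1 :=
      ⟨s/t, div_mul_cancel₀ s ht.ne', div_nonneg hs.le ht.le,
        by rw [div_le_one ht]; exact hst⟩
    have hpt : c • (x + t • k) + (1 - c) • x = x + s • k := by
      rw [smul_add, smul_smul, hct, sub_smul, one_smul]; abel
    have hcv := hconv.2 (mem_univ (x + t • k)) (mem_univ x) hc0 (show (0:ℝ) ≤ 1 - c by linarith) (by ring)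
    rw [hpt] at hcv
    simp only [smul_eq_mul] at hcv
    rw [hq]
    simp only
    rw [div_le_div_iff₀ hs ht]
    have hcv' : F (x + s • k) - F x ≤ c * (F (x + t • k) - F x) := by nlinarith [hcv]
    calc (F (x + s • k) - F x) * t ≤ (c * (F (x + t • k) - F x)) * t :=
          mul_le_mul_of_nonneg_right hcv' ht.le
      _ = (F (x + t • k) - F x) * s := by rw [← hct]; ring
  -- lower bound for slopes
  have hlbq : ∀ k : X, ∀ t : ℝ, 0 < t → F (x + k) - F x - A * φ ‖k‖ ≤ q k t := by
    intro k t ht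
    rcases le_or_gt t 1 with ht1 | ht1
    · have hs := hsmooth t ⟨ht.le, ht1⟩ (x + t • k) k
      have e1 : x + t • k + (1 - t) • k = x + k := by module
      have e2 : x + t • k - t • k = x := by module
      rw [e1, e2] at hs
      rw [hq]
      simp only
      rw [le_div_iff₀ ht]
      nlinarith [hAφ k, ht, sq_nonneg t]
    · calc F (x + k) - F x - A * φ ‖k‖ ≤ F (x + k) - F x := by linarith [hAφ k]
        _ = q k 1 := (hq1 k).symm
        _ ≤ q k t := hqmono k 1 t one_pos ht1.le
  have hbdd : ∀ k, BddBelow (S k) := by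
    intro k
    refine ⟨F (x + k) - F x - A * φ ‖k‖, ?_⟩
    rintro _ ⟨t, ht, rfl⟩
    exact hlbq k t ht
  have hd_le : ∀ k : X, ∀ t : ℝ, 0 < t → d k ≤ q k t := by
    intro k t ht; exact csInf_le (hbdd k) ⟨t, ht, rfl⟩
  have hd_ge : ∀ k : X, F (x + k) - F x - A * φ ‖k‖ ≤ d k := by
    intro k
    apply le_csInf (hSne k)
    rintro _ ⟨t, ht, rfl⟩
    exact hlbq k t ht
  have hd1 : ∀ k : X, d k ≤ F (x + k) - F x := by
    intro k
    calc d k ≤ q k 1 := hd_le k 1 one_pos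
      _ = _ := hq1 k
  have hopt : ∀ k : X, ∀ ε : ℝ, 0 < ε → ∃ t : ℝ, 0 < t ∧ q k t < d k + ε := by
    intro k ε hε
    obtain ⟨a, ⟨t, ht, rfl⟩, hlt⟩ := Real.lt_sInf_add_pos (hSne k) hε
    exact ⟨t, ht, hlt⟩
  have hd0 : d 0 = 0 := by
    have : S 0 = {0} := by
      apply Subset.antisymm
      · rintro _ ⟨t, ht, rfl⟩
        simp [hq]
      · rintro a ha
        rw [mem_singleton_iff] at ha
        exact ⟨1, by norm_num, by simp [hq, ha]⟩
    rw [hd]; simp only [this, csInf_singleton]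
  -- subadditivity
  have hadd_le : ∀ a b : X, d (a + b) ≤ d a + d b := by
    intro a b
    apply le_of_forall_pos_le_add
    intro ε hε
    obtain ⟨t₁, ht₁, hq₁⟩ := hopt a (ε/2) (by linarith)
    obtain ⟨t₂, ht₂, hq₂⟩ := hopt b (ε/2) (by linarith)
    set t := min t₁ t₂ with htdef
    have ht : 0 < t := lt_min ht₁ ht₂
    have hmid : (1/2 : ℝ) • (x + t • a) + (1/2 : ℝ) • (x + t • b) = x + (t/2) • (a + b) := by
      module
    have hcv := hconv.2 (mem_univ (x + t • a)) (mem_univ (x + t • b))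
      (by norm_num : (0:ℝ) ≤ 1/2) (by norm_num : (0:ℝ) ≤ 1/2) (by norm_num)
    rw [hmid] at hcv
    simp only [smul_eq_mul] at hcv
    have key : q (a + b) (t/2) ≤ q a t + q b t := by
      rw [hq]
      simp only
      rw [div_add_div _ _ ht.ne' ht.ne', div_le_div_iff₀ (by linarith) (by positivity)]
      nlinarith [mul_le_mul_of_nonneg_right hcv (mul_pos ht ht).le, ht]
    calc d (a + b) ≤ q (a + b) (t/2) := hd_le _ _ (by positivity)
      _ ≤ q a t + q b t := key
      _ ≤ q a t₁ + q b t₂ := add_le_add (hqmono a t t₁ ht (min_le_left _ _))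
          (hqmono b t t₂ ht (min_le_right _ _))
      _ ≤ d a + d b + ε := by linarith
  -- d k + d (-k) = 0
  have hneg : ∀ k : X, d k + d (-k) = 0 := by
    intro k
    have hge : 0 ≤ d k + d (-k) := by
      apply le_of_forall_pos_le_add
      intro ε hε
      obtain ⟨t₁, ht₁, hq₁⟩ := hopt k (ε/2) (by linarith)
      obtain ⟨t₂, ht₂, hq₂⟩ := hopt (-k) (ε/2) (by linarith)
      set t := min t₁ t₂ with htdef
      have ht : 0 < t := lt_min ht₁ ht₂
      have hmid : (1/2 : ℝ) • (x + t • k) + (1/2 : ℝ) • (x + t • (-k)) = x := by module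
      have hcv := hconv.2 (mem_univ (x + t • k)) (mem_univ (x + t • (-k)))
        (by norm_num : (0:ℝ) ≤ 1/2) (by norm_num : (0:ℝ) ≤ 1/2) (by norm_num)
      rw [hmid] at hcv
      simp only [smul_eq_mul] at hcv
      have key : 0 ≤ q k t + q (-k) t := by
        rw [hq]
        simp only
        rw [div_add_div _ _ ht.ne' ht.ne']
        apply div_nonneg _ (by positivity)
        nlinarith [hcv, ht]
      have h1 : q k t ≤ q k t₁ := hqmono k t t₁ ht (min_le_left _ _)
      have h2 : q (-k) t ≤ q (-k) t₂ := hqmono (-k) t t₂ ht (min_le_right _ _)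
      linarith
    have hle : d k + d (-k) ≤ 0 := by
      apply le_of_forall_pos_le_add
      intro ε hε
      rcases eq_or_ne k 0 with rfl | hk
      · simp only [neg_zero, hd0]; linarith
      · have hknorm : 0 < ‖k‖ := norm_pos_iff.mpr hk
        have hε' : 0 < ε / (A * ‖k‖) := by positivity
        have hev : ∀ᶠ u in nhdsWithin 0 (Ioi (0:ℝ)), ω u < ε / (A * ‖k‖) :=
          h0'.eventually (gt_mem_nhds hε')
        obtain ⟨u, hωu, hu⟩ := (hev.and self_mem_nhdsWithin).exists
        set t := u / (2 * ‖k‖) with htdef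
        have ht : 0 < t := by positivity
        have hnorm2tk : ‖(2*t) • k‖ = u := by
          rw [norm_smul, Real.norm_eq_abs, abs_of_pos (by positivity)]
          rw [htdef]; field_simp
        have hs := hsmooth (1/2) ⟨by norm_num, by norm_num⟩ x ((2*t) • k)
        have e1 : x + (1 - 1/2 : ℝ) • ((2*t) • k) = x + t • k := by
          rw [smul_smul, show (1 - 1/2 : ℝ) * (2*t) = t from by ring]
        have e2 : x - (1/2 : ℝ) • ((2*t) • k) = x + t • (-k) := by
          rw [smul_smul, show ((1:ℝ)/2) * (2*t) = t from by ring, smul_neg,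
            ← sub_eq_add_neg]
        rw [e1, e2, hnorm2tk] at hs
        have hq2 : q k t + q (-k) t ≤ A * ‖k‖ * ω u := by
          have hφu : φ u ≤ u * ω u := hφle u (le_of_lt hu)
          rw [hq]
          simp only
          rw [div_add_div _ _ ht.ne' ht.ne', div_le_iff₀ (by positivity)]
          have hut : u = 2 * t * ‖k‖ := by rw [htdef]; field_simp
          have s1 : F (x + t • k) + F (x + t • (-k)) - 2 * F x ≤ (A/2) * φ u := by
            linarith [hs]
          have s2 : (A/2) * φ u ≤ (A/2) * (u * ω u) :=
            mul_le_mul_of_nonneg_left hφu (by positivity)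
          have s3 : (A/2) * (u * ω u) = A * t * ‖k‖ * ω u := by rw [hut]; ring
          calc (F (x + t • k) - F x) * t + t * (F (x + t • (-k)) - F x)
              = t * (F (x + t • k) + F (x + t • (-k)) - 2 * F x) := by ring
            _ ≤ t * (A * t * ‖k‖ * ω u) := mul_le_mul_of_nonneg_left (by linarith) ht.le
            _ = A * ‖k‖ * ω u * (t * t) := by ring
        have h1 : d k ≤ q k t := hd_le k t ht
        have h2 : d (-k) ≤ q (-k) t := hd_le (-k) t ht
        have : A * ‖k‖ * ω u < ε := by
          rw [lt_div_iff₀ (by positivity)] at hωu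
          linarith [hωu]
        linarith
    linarith
  have hdneg : ∀ k : X, d (-k) = - d k := by
    intro k; have := hneg k; linarith
  have hadd : ∀ a b : X, d (a + b) = d a + d b := by
    intro a b
    refine le_antisymm (hadd_le a b) ?_
    have h1 := hadd_le (a + b) (-b)
    rw [add_neg_cancel_right] at h1
    rw [hdneg b] at h1
    linarith
  -- positive homogeneity
  have hqsmul : ∀ (c : ℝ) (k : X) (s : ℝ), 0 < c → 0 < s → q (c • k) s = c * q k (s * c) := by
    intro c k s hc hs
    have hsc : s * c ≠ 0 := (mul_pos hs hc).ne'
    rw [hq]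
    simp only [smul_smul]
    field_simp
  have hsmul_pos : ∀ (c : ℝ) (k : X), 0 < c → d (c • k) = c * d k := by
    intro c k hc
    apply le_antisymm
    · apply le_of_forall_pos_le_add
      intro ε hε
      obtain ⟨t, ht, hqt⟩ := hopt k (ε/c) (by positivity)
      have h1 : d (c • k) ≤ q (c • k) (t/c) := hd_le _ _ (by positivity)
      have h2 : q (c • k) (t/c) = c * q k t := by
        rw [hqsmul c k (t/c) hc (by positivity)]
        congr 1
        field_simp
      rw [h2] at h1
      have : c * q k t < c * (d k + ε/c) := by
        apply mul_lt_mul_of_pos_left hqt hc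
      have hce : c * (d k + ε/c) = c * d k + ε := by
        rw [mul_add, mul_div_cancel₀ _ hc.ne']
      linarith
    · apply le_of_forall_pos_le_add
      intro ε hε
      obtain ⟨s, hs, hqs⟩ := hopt (c • k) ε hε
      have h1 : d k ≤ q k (s * c) := hd_le _ _ (by positivity)
      have h2 : c * q k (s * c) = q (c • k) s := (hqsmul c k s hc hs).symm
      have : c * d k ≤ c * q k (s*c) := mul_le_mul_of_nonneg_left h1 hc.le
      rw [h2] at this
      linarith
  have hsmul : ∀ (c : ℝ) (k : X), d (c • k) = c * d k := by
    intro c k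
    rcases lt_trichotomy c 0 with hc | hc | hc
    · have h1 : c • k = (-c) • (-k) := by module
      rw [h1, hsmul_pos (-c) (-k) (by linarith), hdneg]
      ring
    · subst hc; simp [hd0]
    · exact hsmul_pos c k hc
  -- boundedness
  obtain ⟨r, hr, M, hM⟩ := aux_loc F hlsc hconv x
  have hFxM : F x ≤ M := hM x (by simpa using hr)
  set K : ℝ := M - F x with hK
  have hK0 : 0 ≤ K := by linarith
  have habs : ∀ k : X, ‖k‖ < r → |d k| ≤ K := by
    intro k hk
    rw [abs_le]
    constructor
    · have h1 : d (-k) ≤ F (x + (-k)) - F x := hd1 (-k)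
      have h2 : F (x + (-k)) ≤ M := by
        apply hM
        rw [dist_eq_norm]
        simpa using hk
      rw [hdneg] at h1
      rw [hK]; linarith
    · have h1 : d k ≤ F (x + k) - F x := hd1 k
      have h2 : F (x + k) ≤ M := by
        apply hM
        rw [dist_eq_norm]
        simpa using hk
      rw [hK]; linarith
  have hbound : ∀ k : X, |d k| ≤ (2 * K / r) * ‖k‖ := by
    intro k
    rcases eq_or_ne k 0 with rfl | hk
    · simp [hd0]
    · have hkn : 0 < ‖k‖ := norm_pos_iff.mpr hk
      set c : ℝ := r / (2 * ‖k‖) with hc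
      have hc0 : 0 < c := by positivity
      have hck : ‖c • k‖ = r / 2 := by
        rw [norm_smul, Real.norm_eq_abs, abs_of_pos hc0, hc]
        rw [div_mul_eq_mul_div, mul_comm r ‖k‖, mul_comm (2:ℝ) ‖k‖,
          mul_div_mul_left _ _ hkn.ne']
      have h1 : |d (c • k)| ≤ K := habs _ (by rw [hck]; linarith)
      rw [hsmul c k, abs_mul, abs_of_pos hc0] at h1
      rw [hc, div_mul_eq_mul_div, div_le_iff₀ (by positivity : (0:ℝ) < 2 * ‖k‖)] at h1
      rw [div_mul_eq_mul_div, le_div_iff₀ hr]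
      nlinarith [h1]
  -- build the continuous linear map
  obtain ⟨L, hLk⟩ : ∃ L : X →L[ℝ] ℝ, ∀ k, L k = d k := by
    refine ⟨LinearMap.mkContinuous
      { toFun := d, map_add' := hadd,
        map_smul' := by intro c k; simpa using hsmul c k } (2 * K / r) ?_, fun k => rfl⟩
    intro k
    rw [Real.norm_eq_abs]
    exact hbound k
  refine ⟨L, ?_, ?_, ?_⟩
  · rw [hasFDerivAt_iff_isLittleO_nhds_zero]
    rw [Asymptotics.isLittleO_iff]
    intro c hc
    have hev : ∀ᶠ u in nhdsWithin 0 (Ioi (0:ℝ)), ω u < c / A :=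
      h0'.eventually (gt_mem_nhds (by positivity))
    rw [Filter.eventually_iff, mem_nhdsGT_iff_exists_Ioo_subset] at hev
    obtain ⟨u₀, hu₀, hsub⟩ := hev
    rw [Filter.eventually_iff_exists_mem]
    refine ⟨Metric.ball 0 u₀, Metric.ball_mem_nhds 0 hu₀, ?_⟩
    intro h hh
    rw [Metric.mem_ball, dist_zero_right] at hh
    have hge : 0 ≤ F (x + h) - F x - L h := by
      rw [hLk]; linarith [hd1 h]
    have hle2 : F (x + h) - F x - L h ≤ A * φ ‖h‖ := by
      rw [hLk]; linarith [hd_ge h]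
    rw [Real.norm_eq_abs, abs_of_nonneg hge]
    rcases eq_or_lt_of_le (norm_nonneg h) with h0n | h0n
    · have : h = 0 := by rwa [eq_comm, norm_eq_zero] at h0n
      subst this
      simpa using hge.le.trans (by rw [norm_zero, mul_zero] at *; linarith [hge] )
    · have hωh : ω ‖h‖ < c / A := hsub ⟨h0n, hh⟩
      have : A * φ ‖h‖ ≤ A * (‖h‖ * ω ‖h‖) :=
        mul_le_mul_of_nonneg_left (hφle ‖h‖ (norm_nonneg h)) hA.le
      have h2 : A * (‖h‖ * ω ‖h‖) ≤ c * ‖h‖ := by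
        rw [lt_div_iff₀ hA] at hωh
        nlinarith [norm_nonneg h, hωh]
      calc F (x + h) - F x - L h ≤ A * φ ‖h‖ := hle2
        _ ≤ A * (‖h‖ * ω ‖h‖) := this
        _ ≤ c * ‖h‖ := h2
  · intro k; rw [hLk]; exact hd1 k
  · intro k; rw [hLk]; linarith [hd_ge k]

theorem aux_phi2 (ω φ : ℝ → ℝ)
    (hnonneg : ∀ t ∈ Ici (0:ℝ), 0 ≤ ω t)
    (hmono : MonotoneOn ω (Ici (0:ℝ)))
    (hconc : ConcaveOn ℝ (Ici (0:ℝ)) ω)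
    (hφ : ∀ t, φ t = ∫ s in (0:ℝ)..t, ω s)
    {δ : ℝ} (hδ : 0 ≤ δ) : φ (2*δ) ≤ 2*δ*ω δ := by
  have h2δ : (0:ℝ) ≤ 2*δ := by linarith
  have hint : IntervalIntegrable ω MeasureTheory.volume 0 (2*δ) :=
    (hmono.mono (by rw [uIcc_of_le h2δ]; exact fun z hz => hz.1)).intervalIntegrable
  have hint2 : IntervalIntegrable (fun s => ω (2*δ - s)) MeasureTheory.volume 0 (2*δ) := by
    apply AntitoneOn.intervalIntegrable
    rw [uIcc_of_le h2δ]
    intro a ha b hb hab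
    exact hmono (by simp; linarith [hb.2]) (by simp; linarith [ha.2]) (by linarith)
  have hrefl : (∫ s in (0:ℝ)..(2*δ), ω (2*δ - s)) = ∫ s in (0:ℝ)..(2*δ), ω s := by
    rw [intervalIntegral.integral_comp_sub_left ω (2*δ)]
    norm_num
  have key : (∫ s in (0:ℝ)..(2*δ), (ω s + ω (2*δ - s))) ≤ ∫ s in (0:ℝ)..(2*δ), (2 * ω δ) := by
    apply intervalIntegral.integral_mono_on h2δ (hint.add hint2) intervalIntegrable_const
    intro u hu
    have h1 : u ∈ Ici (0:ℝ) := hu.1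
    have h2 : 2*δ - u ∈ Ici (0:ℝ) := by simp; linarith [hu.2]
    have := hconc.2 h1 h2 (by norm_num : (0:ℝ) ≤ (1:ℝ)/2) (by norm_num : (0:ℝ) ≤ (1:ℝ)/2) (by norm_num)
    have he : (1/2 : ℝ) • u + (1/2 : ℝ) • (2*δ - u) = δ := by ring_nf
    rw [he] at this
    simp only [smul_eq_mul] at this
    linarith
  rw [intervalIntegral.integral_add hint hint2, hrefl] at key
  simp only [intervalIntegral.integral_const, smul_eq_mul, sub_zero] at key
  rw [hφ]
  linarith

theorem stmt_12 {X : Type*} [NormedAddCommGroup X] [NormedSpace ℝ X] [CompleteSpace X]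
    (ω φ : ℝ → ℝ)
    (hnonneg : ∀ t ∈ Ici (0:ℝ), 0 ≤ ω t)
    (hmono : MonotoneOn ω (Ici (0:ℝ)))
    (hconc : ConcaveOn ℝ (Ici (0:ℝ)) ω)
    (h0 : ω 0 = 0)
    (h0' : Filter.Tendsto ω (nhdsWithin 0 (Ioi (0:ℝ))) (nhds 0))
    (hφ : ∀ t, φ t = ∫ s in (0:ℝ)..t, ω s)
    (F : X → ℝ) (hlsc : LowerSemicontinuous F) (hconv : ConvexOn ℝ univ F)
    (A : ℝ) (hA : 0 < A)
    (hsmooth : ∀ l ∈ Icc (0:ℝ) 1, ∀ x h : X,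
      l * F (x + (1 - l) • h) + (1 - l) * F (x - l • h) - F x
        ≤ l * (1 - l) * A * φ ‖h‖) :
    Differentiable ℝ F ∧
    (∀ x h : X, F (x + h) - F x - fderiv ℝ F x h ≤ A * φ ‖h‖) ∧
    (∀ x y : X, ‖fderiv ℝ F x - fderiv ℝ F y‖ ≤ 4 / 3 * A * ω ‖x - y‖) := by
  obtain ⟨hφ0, hφmono, hφle⟩ := aux_phi ω φ hnonneg hmono hφ
  have key := fun x => aux_deriv ω φ hnonneg hmono h0' hφ F hlsc hconv A hA hsmooth x
  choose L hL1 hL2 hL3 using key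
  have hdiff : Differentiable ℝ F := fun x => (hL1 x).differentiableAt
  have hfd : ∀ x, fderiv ℝ F x = L x := fun x => (hL1 x).fderiv
  refine ⟨hdiff, ?_, ?_⟩
  · intro x h
    rw [hfd x]
    linarith [hL3 x h]
  · intro x y
    rw [hfd x, hfd y]
    rcases eq_or_ne x y with rfl | hxy
    · simp [h0]
    · set δ : ℝ := ‖x - y‖ with hδ
      have hδ0 : 0 < δ := by rw [hδ]; exact norm_sub_pos_iff.mpr hxy
      set T : X →L[ℝ] ℝ := L x - L y with hT
      have hTapp : ∀ k : X, T k = (L x) k - (L y) k := by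
        intro k; rw [hT]; simp
      set α : ℝ := F x - F y - (L y) (x - y) with hα
      set β : ℝ := F y - F x - (L x) (y - x) with hβ
      have hab : α + β = T (x - y) := by
        rw [hα, hβ, hTapp]
        have : (L x) (y - x) = - (L x) (x - y) := by
          rw [← map_neg]; congr 1; abel
        rw [this]
        ring
      have hkey1 : ∀ k : X, (L y) k - (L x) k ≤ α + A * φ ‖k‖ := by
        intro k
        have h1 : (L y) (x - y + k) ≤ F (y + (x - y + k)) - F y := hL2 y (x - y + k)
        have e : y + (x - y + k) = x + k := by abel
        rw [e] at h1
        have h2 : F (x + k) - F x ≤ (L x) k + A * φ ‖k‖ := hL3 x k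
        have h3 : (L y) (x - y + k) = (L y) (x - y) + (L y) k := map_add _ _ _
        rw [h3] at h1
        rw [hα]
        linarith
      have hkey2 : ∀ k : X, (L x) k - (L y) k ≤ β + A * φ ‖k‖ := by
        intro k
        have h1 : (L x) (y - x + k) ≤ F (x + (y - x + k)) - F x := hL2 x (y - x + k)
        have e : x + (y - x + k) = y + k := by abel
        rw [e] at h1
        have h2 : F (y + k) - F y ≤ (L y) k + A * φ ‖k‖ := hL3 y k
        have h3 : (L x) (y - x + k) = (L x) (y - x) + (L x) k := map_add _ _ _
        rw [h3] at h1
        rw [hβ]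
        linarith
      set c : ℝ := (‖T‖ * δ + 2 * (A * φ (2*δ)))/2 with hc
      have hTd : T (x - y) ≤ ‖T‖ * δ := by
        calc T (x - y) ≤ ‖T (x - y)‖ := le_abs_self _
          _ ≤ ‖T‖ * ‖x - y‖ := T.le_opNorm _
      have habs : ∀ k : X, ‖k‖ ≤ 2*δ → |T k| ≤ c := by
        intro k hk
        have hφk : φ ‖k‖ ≤ φ (2*δ) := hφmono _ _ (norm_nonneg k) hk
        have hb1 : T k ≤ c := by
          have h1 : (L y) (-k) - (L x) (-k) ≤ α + A * φ ‖k‖ := by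
            have := hkey1 (-k); rwa [norm_neg] at this
          have h1' : T k ≤ α + A * φ ‖k‖ := by
            rw [hTapp]; simp only [map_neg] at h1; linarith
          have h2' : T k ≤ β + A * φ ‖k‖ := by
            rw [hTapp]; linarith [hkey2 k]
          have hmul : A * φ ‖k‖ ≤ A * φ (2*δ) := mul_le_mul_of_nonneg_left hφk hA.le
          rw [hc]
          linarith [hab, hTd]
        have hb2 : T (-k) ≤ c := by
          have h1 : (L y) k - (L x) k ≤ α + A * φ ‖k‖ := hkey1 k
          have h2 : (L x) (-k) - (L y) (-k) ≤ β + A * φ ‖k‖ := by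
            have := hkey2 (-k); rwa [norm_neg] at this
          have h1' : T (-k) ≤ α + A * φ ‖k‖ := by
            rw [hTapp]; simp only [map_neg]; linarith
          have h2' : T (-k) ≤ β + A * φ ‖k‖ := by
            rw [hTapp]; linarith
          have hmul : A * φ ‖k‖ ≤ A * φ (2*δ) := mul_le_mul_of_nonneg_left hφk hA.le
          rw [hc]
          linarith [hab, hTd]
        rw [abs_le]
        constructor
        · have : T (-k) = - T k := by rw [map_neg]
          linarith [hb2, this ▸ hb2]
        · exact hb1
      have hc0 : 0 ≤ c := by
        have h1 : |T 0| ≤ c := habs 0 (by simp; positivity)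
        exact le_trans (abs_nonneg _) h1
      have hTnorm : ‖T‖ ≤ c / (2*δ) := by
        apply ContinuousLinearMap.opNorm_le_bound _ (by positivity)
        intro k
        rcases eq_or_ne k 0 with rfl | hk
        · simp
        · have hkn : 0 < ‖k‖ := norm_pos_iff.mpr hk
          have hsc : ‖((2*δ/‖k‖) : ℝ) • k‖ = 2*δ := by
            rw [norm_smul, Real.norm_eq_abs, abs_of_pos (by positivity)]
            field_simp
          have h1 : |T ((2*δ/‖k‖ : ℝ) • k)| ≤ c := habs _ (le_of_eq hsc)
          rw [map_smul] at h1
          simp only [smul_eq_mul, abs_mul, abs_of_pos (show (0:ℝ) < 2*δ/‖k‖ by positivity)] at h1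
          rw [Real.norm_eq_abs]
          rw [div_mul_eq_mul_div, le_div_iff₀ (by positivity : (0:ℝ) < 2*δ)]
          rw [div_mul_eq_mul_div, div_le_iff₀ hkn] at h1
          linarith [h1]
      have hφ2δ : φ (2*δ) ≤ 2*δ*(ω δ) := aux_phi2 ω φ hnonneg hmono hconc hφ hδ0.le
      have h1 : ‖T‖ * (2*δ) ≤ c := by
        rwa [le_div_iff₀ (by positivity : (0:ℝ) < 2*δ)] at hTnorm
      have h2 : A * φ (2*δ) ≤ A * (2*δ*(ω δ)) := mul_le_mul_of_nonneg_left hφ2δ hA.le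
      rw [hc] at h1
      nlinarith [h1, h2, hδ0]
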